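/- Suppose in addition that A and D are invertible in Mat_N(𝒜). Then with M := D A^{−1} D^{−1} A, the quantum moment map identity holds on the coordinate generators: R₂₁ M₁ R A₂ = A₂ R₂₁ M₁ R. (This is the matrix identity establishing that the loop moment map μ^e_v, l^i_j ↦ M^i_j, satisfies the quantum moment map condition μ(x)·y = (x₍₁₎ ▷ y)·μ(x₍₂₎) on the generators a^m_n.) -/

import Mathlib

open Matrix Kronecker

noncomputable section

/-- Coefficient matrix of the R-matrix `R[N]` on `k^N ⊗ k^N`: the entry in
row `(i,j)`, column `(s,t)` is `q^{δ_{ij}} δ_{is} δ_{jt} + (q-q⁻¹) θ(i-j) δ_{it} δ_{js}`,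
where `θ(x) = 1` if `x > 0` and `0` otherwise. -/
def Rmat (k : Type) [Field k] (q : k) (N : ℕ) :
    Matrix (Fin N × Fin N) (Fin N × Fin N) k :=
  Matrix.of fun p r =>
    (if p.1 = p.2 then q else 1) * (if p = r then 1 else 0)
      + (q - q⁻¹) * ((if p.2 < p.1 then (1 : k) else 0) *
          (if p.1 = r.2 ∧ p.2 = r.1 then 1 else 0))

/-- The explicit inverse of `R[N]`:
`(R⁻¹)^{ij}_{st} = q^{-δ_{ij}} δ_{is} δ_{jt} - (q-q⁻¹) θ(i-j) δ_{it} δ_{js}`. -/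
def RmatInv (k : Type) [Field k] (q : k) (N : ℕ) :
    Matrix (Fin N × Fin N) (Fin N × Fin N) k :=
  Matrix.of fun p r =>
    (if p.1 = p.2 then q⁻¹ else 1) * (if p = r then 1 else 0)
      - (q - q⁻¹) * ((if p.2 < p.1 then (1 : k) else 0) *
          (if p.1 = r.2 ∧ p.2 = r.1 then 1 else 0))

variable (k : Type) [Field k] (𝒜 : Type) [Ring 𝒜] [Algebra k 𝒜]

/-- `R[N]` regarded as a matrix over the `k`-algebra `𝒜`. -/
def RA (q : k) (N : ℕ) : Matrix (Fin N × Fin N) (Fin N × Fin N) 𝒜 :=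
  (Rmat k q N).map (algebraMap k 𝒜)

/-- `R[N]₂₁ := τ ∘ R[N] ∘ τ` regarded as a matrix over `𝒜`. -/
def RA21 (q : k) (N : ℕ) : Matrix (Fin N × Fin N) (Fin N × Fin N) 𝒜 :=
  Matrix.of fun p r => RA k 𝒜 q N (p.2, p.1) (r.2, r.1)

/-- `(R[N])⁻¹` regarded as a matrix over `𝒜`. -/
def RAinv (q : k) (N : ℕ) : Matrix (Fin N × Fin N) (Fin N × Fin N) 𝒜 :=
  (RmatInv k q N).map (algebraMap k 𝒜)

/-- `(R[N]₂₁)⁻¹ = (R[N]⁻¹)₂₁` regarded as a matrix over `𝒜`. -/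
def RAinv21 (q : k) (N : ℕ) : Matrix (Fin N × Fin N) (Fin N × Fin N) 𝒜 :=
  Matrix.of fun p r => RAinv k 𝒜 q N (p.2, p.1) (r.2, r.1)

/-- The flip `τ : k^m ⊗ k^n → k^n ⊗ k^m` as a matrix over `𝒜`. -/
def flipA (m n : ℕ) : Matrix (Fin n × Fin m) (Fin m × Fin n) 𝒜 :=
  Matrix.of fun p r => if p.1 = r.2 ∧ p.2 = r.1 then 1 else 0

/-- The defining relations (M1), (M2), (M3) of the quantized edge algebra `𝒟_q(e)`
of the Kronecker quiver with tail dimension `n` and head dimension `m`, for an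
`n × m` matrix `A` and an `m × n` matrix `D` over `𝒜`:
(M1) `R[n] A₂ A₁ = A₁ A₂ R[m]₂₁`, (M2) `R[m] D₂ D₁ = D₁ D₂ R[n]₂₁`,
(M3) `D₂ (R[n])⁻¹ A₁ = A₁ R[m] D₂ + τ`. -/
def EdgeRel (q : k) {n m : ℕ}
    (A : Matrix (Fin n) (Fin m) 𝒜) (D : Matrix (Fin m) (Fin n) 𝒜) : Prop :=
  RA k 𝒜 q n * ((1 : Matrix (Fin n) (Fin n) 𝒜) ⊗ₖ A) * (A ⊗ₖ (1 : Matrix (Fin m) (Fin m) 𝒜))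
      = (A ⊗ₖ (1 : Matrix (Fin n) (Fin n) 𝒜)) * ((1 : Matrix (Fin m) (Fin m) 𝒜) ⊗ₖ A)
          * RA21 k 𝒜 q m
    ∧ RA k 𝒜 q m * ((1 : Matrix (Fin m) (Fin m) 𝒜) ⊗ₖ D) * (D ⊗ₖ (1 : Matrix (Fin n) (Fin n) 𝒜))
      = (D ⊗ₖ (1 : Matrix (Fin m) (Fin m) 𝒜)) * ((1 : Matrix (Fin n) (Fin n) 𝒜) ⊗ₖ D)
          * RA21 k 𝒜 q n
    ∧ ((1 : Matrix (Fin n) (Fin n) 𝒜) ⊗ₖ D) * RAinv k 𝒜 q n * (A ⊗ₖ (1 : Matrix (Fin n) (Fin n) 𝒜))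
      = (A ⊗ₖ (1 : Matrix (Fin m) (Fin m) 𝒜)) * RA k 𝒜 q m * ((1 : Matrix (Fin m) (Fin m) 𝒜) ⊗ₖ D)
          + flipA 𝒜 m n

/-- The defining relations (L1), (L2), (L3) of the quantized loop edge algebra `𝒟_q(e)`
at a vertex of dimension `N`, with `R := R[N]`:
(L1) `R₂₁ A₁ R A₂ = A₂ R₂₁ A₁ R`, (L2) `R₂₁ D₁ R D₂ = D₂ R₂₁ D₁ R`,
(L3) `R₂₁ D₁ R A₂ = A₂ R₂₁ D₁ R₂₁⁻¹`. -/
def LoopRel (q : k) {N : ℕ} (A D : Matrix (Fin N) (Fin N) 𝒜) : Prop :=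
  RA21 k 𝒜 q N * (A ⊗ₖ (1 : Matrix (Fin N) (Fin N) 𝒜)) * RA k 𝒜 q N
        * ((1 : Matrix (Fin N) (Fin N) 𝒜) ⊗ₖ A)
      = ((1 : Matrix (Fin N) (Fin N) 𝒜) ⊗ₖ A) * RA21 k 𝒜 q N
        * (A ⊗ₖ (1 : Matrix (Fin N) (Fin N) 𝒜)) * RA k 𝒜 q N
    ∧ RA21 k 𝒜 q N * (D ⊗ₖ (1 : Matrix (Fin N) (Fin N) 𝒜)) * RA k 𝒜 q N
        * ((1 : Matrix (Fin N) (Fin N) 𝒜) ⊗ₖ D)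
      = ((1 : Matrix (Fin N) (Fin N) 𝒜) ⊗ₖ D) * RA21 k 𝒜 q N
        * (D ⊗ₖ (1 : Matrix (Fin N) (Fin N) 𝒜)) * RA k 𝒜 q N
    ∧ RA21 k 𝒜 q N * (D ⊗ₖ (1 : Matrix (Fin N) (Fin N) 𝒜)) * RA k 𝒜 q N
        * ((1 : Matrix (Fin N) (Fin N) 𝒜) ⊗ₖ A)
      = ((1 : Matrix (Fin N) (Fin N) 𝒜) ⊗ₖ A) * RA21 k 𝒜 q N
        * (D ⊗ₖ (1 : Matrix (Fin N) (Fin N) 𝒜)) * RAinv21 k 𝒜 q N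

/-! ### Auxiliary lemmas -/

section AuxLemmas

lemma Rmat_mul_RmatInv (k : Type) [Field k] (q : k) (hq : q ≠ 0) (N : ℕ) :
    Rmat k q N * RmatInv k q N = 1 := by
  ext p r
  rw [Matrix.mul_apply]
  have key : ∀ x : Fin N × Fin N,
      Rmat k q N p x * RmatInv k q N x r
        = (if x = p then (if p.1 = p.2 then q else 1) * RmatInv k q N p r else 0)
          + (if x = (p.2, p.1) then
              ((q - q⁻¹) * (if p.2 < p.1 then (1:k) else 0)) * RmatInv k q N (p.2,p.1) r
             else 0) := by
    intro x
    simp only [Rmat, Matrix.of_apply]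
    rw [add_mul]
    congr 1
    · rcases eq_or_ne x p with rfl | hx
      · simp
      · rw [if_neg (Ne.symm hx), if_neg hx]; ring
    · have hiff : (p.1 = x.2 ∧ p.2 = x.1) ↔ x = (p.2, p.1) := by
        constructor
        · rintro ⟨h1, h2⟩; exact Prod.ext h2.symm h1.symm
        · rintro rfl; exact ⟨rfl, rfl⟩
      rcases eq_or_ne x (p.2, p.1) with hx | hx
      · rw [if_pos (hiff.mpr hx), if_pos hx, hx]; ring
      · rw [if_neg (fun h => hx (hiff.mp h)), if_neg hx]; ring
  rw [Finset.sum_congr rfl fun x _ => key x, Finset.sum_add_distrib,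
    Finset.sum_ite_eq' Finset.univ p, Finset.sum_ite_eq' Finset.univ (p.2,p.1)]
  simp only [Finset.mem_univ, if_true]
  obtain ⟨i, j⟩ := p
  obtain ⟨s, t⟩ := r
  simp only [RmatInv, Matrix.of_apply, Matrix.one_apply, Prod.mk.injEq]
  have hqq : q * q⁻¹ = 1 := mul_inv_cancel₀ hq
  rcases lt_trichotomy i j with h | h | h
  · have h1 : ¬ (j < i) := by omega
    have h2 : i ≠ j := h.ne
    have h2' : j ≠ i := Ne.symm h2
    simp only [h, h1, h2, h2', if_true, if_false, ite_true, ite_false, eq_self_iff_true]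
    split_ifs <;> first | ring1 | exact hqq | (exfalso; omega) | linear_combination hqq
  · subst h
    have h1 : ¬ (i < i) := lt_irrefl i
    simp only [h1, if_false, ite_false, eq_self_iff_true, if_true, ite_true]
    split_ifs <;> first | ring1 | exact hqq | (exfalso; omega) | linear_combination hqq
  · have h1 : j < i := h
    have h2 : i ≠ j := (ne_of_gt h)
    have h2' : j ≠ i := Ne.symm h2
    have h3 : ¬ (i < j) := by omega
    simp only [h1, h2, h2', h3, if_true, if_false, ite_true, ite_false, eq_self_iff_true]
    split_ifs <;> first | ring1 | exact hqq | (exfalso; omega) | linear_combination hqq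

lemma RmatInv_mul_Rmat (k : Type) [Field k] (q : k) (hq : q ≠ 0) (N : ℕ) :
    RmatInv k q N * Rmat k q N = 1 :=
  mul_eq_one_comm.mp (Rmat_mul_RmatInv k q hq N)

/-- Hecke-type identity at the level of `k`:
`R₂₁ = R⁻¹ + (q - q⁻¹) τ` entrywise. -/
lemma hecke_k (k : Type) [Field k] (q : k) (N : ℕ) (p r : Fin N × Fin N) :
    Rmat k q N (p.2, p.1) (r.2, r.1)
      = RmatInv k q N p r + (if p.1 = r.2 ∧ p.2 = r.1 then q - q⁻¹ else 0) := by
  obtain ⟨i, j⟩ := p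
  obtain ⟨s, t⟩ := r
  simp only [Rmat, RmatInv, Matrix.of_apply, Prod.mk.injEq]
  rcases lt_trichotomy i j with h | h | h
  · have h1 : ¬ (j < i) := by omega
    have h2 : i ≠ j := h.ne
    have h2' : j ≠ i := Ne.symm h2
    simp only [h, h1, h2, h2', if_true, if_false, ite_true, ite_false]
    split_ifs <;> first | ring1 | (exfalso; omega)
  · subst h
    have h1 : ¬ (i < i) := lt_irrefl i
    simp only [h1, if_false, ite_false, eq_self_iff_true, if_true, ite_true]
    split_ifs <;> first | ring1 | (exfalso; omega)
  · have h1 : j < i := h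
    have h2 : i ≠ j := (ne_of_gt h)
    have h2' : j ≠ i := Ne.symm h2
    have h3 : ¬ (i < j) := by omega
    simp only [h1, h2, h2', h3, if_true, if_false, ite_true, ite_false]
    split_ifs <;> first | ring1 | (exfalso; omega)

/-- Hecke-type identity at the level of `k`:
`R = (R₂₁)⁻¹ + (q - q⁻¹) τ` entrywise. -/
lemma hecke_k' (k : Type) [Field k] (q : k) (N : ℕ) (p r : Fin N × Fin N) :
    Rmat k q N p r
      = RmatInv k q N (p.2, p.1) (r.2, r.1)
          + (if p.1 = r.2 ∧ p.2 = r.1 then q - q⁻¹ else 0) := by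
  obtain ⟨i, j⟩ := p
  obtain ⟨s, t⟩ := r
  simp only [Rmat, RmatInv, Matrix.of_apply, Prod.mk.injEq]
  rcases lt_trichotomy i j with h | h | h
  · have h1 : ¬ (j < i) := by omega
    have h2 : i ≠ j := h.ne
    have h2' : j ≠ i := Ne.symm h2
    simp only [h, h1, h2, h2', if_true, if_false, ite_true, ite_false]
    split_ifs <;> first | ring1 | (exfalso; omega)
  · subst h
    have h1 : ¬ (i < i) := lt_irrefl i
    simp only [h1, if_false, ite_false, eq_self_iff_true, if_true, ite_true]
    split_ifs <;> first | ring1 | (exfalso; omega)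
  · have h1 : j < i := h
    have h2 : i ≠ j := (ne_of_gt h)
    have h2' : j ≠ i := Ne.symm h2
    have h3 : ¬ (i < j) := by omega
    simp only [h1, h2, h2', h3, if_true, if_false, ite_true, ite_false]
    split_ifs <;> first | ring1 | (exfalso; omega)

variable {k} {𝒜}

lemma RA_mul_RAinv (q : k) (hq : q ≠ 0) (N : ℕ) :
    RA k 𝒜 q N * RAinv k 𝒜 q N = 1 := by
  rw [RA, RAinv, ← Matrix.map_mul, Rmat_mul_RmatInv k q hq N,
    Matrix.map_one _ (map_zero _) (map_one _)]

lemma RAinv_mul_RA (q : k) (hq : q ≠ 0) (N : ℕ) :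
    RAinv k 𝒜 q N * RA k 𝒜 q N = 1 := by
  rw [RA, RAinv, ← Matrix.map_mul, RmatInv_mul_Rmat k q hq N,
    Matrix.map_one _ (map_zero _) (map_one _)]

lemma flipA_mul_apply {N : ℕ} (X : Matrix (Fin N × Fin N) (Fin N × Fin N) 𝒜)
    (p j : Fin N × Fin N) : (flipA 𝒜 N N * X) p j = X (p.2, p.1) j := by
  rw [Matrix.mul_apply]
  have key : ∀ a : Fin N × Fin N,
      flipA 𝒜 N N p a * X a j = if a = (p.2, p.1) then X (p.2, p.1) j else 0 := by
    intro a
    rcases eq_or_ne a (p.2, p.1) with rfl | ha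
    · simp [flipA]
    · have : ¬ (p.1 = a.2 ∧ p.2 = a.1) := by
        rintro ⟨h1, h2⟩; exact ha (Prod.ext h2.symm h1.symm)
      simp [flipA, this, ha]
  rw [Finset.sum_congr rfl fun a _ => key a, Finset.sum_ite_eq' Finset.univ (p.2, p.1)]
  simp

lemma mul_flipA_apply {N : ℕ} (X : Matrix (Fin N × Fin N) (Fin N × Fin N) 𝒜)
    (p j : Fin N × Fin N) : (X * flipA 𝒜 N N) p j = X p (j.2, j.1) := by
  rw [Matrix.mul_apply]
  have key : ∀ a : Fin N × Fin N,
      X p a * flipA 𝒜 N N a j = if a = (j.2, j.1) then X p (j.2, j.1) else 0 := by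
    intro a
    rcases eq_or_ne a (j.2, j.1) with rfl | ha
    · simp [flipA]
    · have : ¬ (a.1 = j.2 ∧ a.2 = j.1) := by
        rintro ⟨h1, h2⟩; exact ha (Prod.ext h1 h2)
      simp [flipA, this, ha]
  rw [Finset.sum_congr rfl fun a _ => key a, Finset.sum_ite_eq' Finset.univ (j.2, j.1)]
  simp

lemma flipA_mul_flipA {N : ℕ} : flipA 𝒜 N N * flipA 𝒜 N N = 1 := by
  ext p r
  rw [flipA_mul_apply]
  by_cases h : p = r
  · subst h; simp [flipA, Matrix.one_apply]
  · have h' : ¬ (p.2 = r.2 ∧ p.1 = r.1) := by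
      rintro ⟨h1, h2⟩; exact h (Prod.ext h2 h1)
    simp [flipA, Matrix.one_apply, h, h']

lemma RA21_eq_conj (q : k) (N : ℕ) :
    RA21 k 𝒜 q N = flipA 𝒜 N N * RA k 𝒜 q N * flipA 𝒜 N N := by
  ext p r
  rw [mul_flipA_apply, flipA_mul_apply]
  rfl

lemma RAinv21_eq_conj (q : k) (N : ℕ) :
    RAinv21 k 𝒜 q N = flipA 𝒜 N N * RAinv k 𝒜 q N * flipA 𝒜 N N := by
  ext p r
  rw [mul_flipA_apply, flipA_mul_apply]
  rfl

lemma conj_mul_conj {N : ℕ} (X Y : Matrix (Fin N × Fin N) (Fin N × Fin N) 𝒜) :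
    (flipA 𝒜 N N * X * flipA 𝒜 N N) * (flipA 𝒜 N N * Y * flipA 𝒜 N N)
      = flipA 𝒜 N N * (X * Y) * flipA 𝒜 N N := by
  have h : ∀ w : Matrix (Fin N × Fin N) (Fin N × Fin N) 𝒜,
      flipA 𝒜 N N * (flipA 𝒜 N N * w) = w := fun w => by
    rw [← mul_assoc, flipA_mul_flipA, one_mul]
  calc (flipA 𝒜 N N * X * flipA 𝒜 N N) * (flipA 𝒜 N N * Y * flipA 𝒜 N N)
      = flipA 𝒜 N N * (X * (flipA 𝒜 N N * (flipA 𝒜 N N * (Y * flipA 𝒜 N N)))) := by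
        simp only [mul_assoc]
    _ = flipA 𝒜 N N * (X * (Y * flipA 𝒜 N N)) := by rw [h]
    _ = flipA 𝒜 N N * (X * Y) * flipA 𝒜 N N := by simp only [mul_assoc]

lemma RA21_mul_RAinv21 (q : k) (hq : q ≠ 0) (N : ℕ) :
    RA21 k 𝒜 q N * RAinv21 k 𝒜 q N = 1 := by
  rw [RA21_eq_conj, RAinv21_eq_conj, conj_mul_conj, RA_mul_RAinv q hq N, mul_one,
    flipA_mul_flipA]

lemma RAinv21_mul_RA21 (q : k) (hq : q ≠ 0) (N : ℕ) :
    RAinv21 k 𝒜 q N * RA21 k 𝒜 q N = 1 := by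
  rw [RA21_eq_conj, RAinv21_eq_conj, conj_mul_conj, RAinv_mul_RA q hq N, mul_one,
    flipA_mul_flipA]

lemma flipA_mul_RA21 (q : k) (N : ℕ) :
    flipA 𝒜 N N * RA21 k 𝒜 q N = RA k 𝒜 q N * flipA 𝒜 N N := by
  rw [RA21_eq_conj]
  simp only [← mul_assoc]
  rw [flipA_mul_flipA, one_mul]

lemma flipA_mul_oneKron {N : ℕ} (X : Matrix (Fin N) (Fin N) 𝒜) :
    flipA 𝒜 N N * ((1 : Matrix (Fin N) (Fin N) 𝒜) ⊗ₖ X)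
      = (X ⊗ₖ (1 : Matrix (Fin N) (Fin N) 𝒜)) * flipA 𝒜 N N := by
  ext p r
  rw [flipA_mul_apply, mul_flipA_apply]
  simp only [Matrix.kroneckerMap_apply, Matrix.one_apply]
  split_ifs <;> simp

lemma flipA_mul_kronOne {N : ℕ} (X : Matrix (Fin N) (Fin N) 𝒜) :
    flipA 𝒜 N N * (X ⊗ₖ (1 : Matrix (Fin N) (Fin N) 𝒜))
      = ((1 : Matrix (Fin N) (Fin N) 𝒜) ⊗ₖ X) * flipA 𝒜 N N := by
  ext p r
  rw [flipA_mul_apply, mul_flipA_apply]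
  simp only [Matrix.kroneckerMap_apply, Matrix.one_apply]
  split_ifs <;> simp

lemma RA21_hecke (q : k) (N : ℕ) :
    RA21 k 𝒜 q N = RAinv k 𝒜 q N + (q - q⁻¹) • flipA 𝒜 N N := by
  ext p r
  rw [Matrix.add_apply]
  have hs : ((q - q⁻¹) • flipA 𝒜 N N) p r
      = algebraMap k 𝒜 (if p.1 = r.2 ∧ p.2 = r.1 then q - q⁻¹ else 0) := by
    rw [Matrix.smul_apply]
    simp only [flipA, Matrix.of_apply]
    split_ifs <;> simp [Algebra.smul_def]
  rw [hs]
  show algebraMap k 𝒜 (Rmat k q N (p.2, p.1) (r.2, r.1))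
      = algebraMap k 𝒜 (RmatInv k q N p r) + _
  rw [← map_add]
  exact congrArg _ (hecke_k k q N p r)

lemma RA_hecke (q : k) (N : ℕ) :
    RA k 𝒜 q N = RAinv21 k 𝒜 q N + (q - q⁻¹) • flipA 𝒜 N N := by
  ext p r
  rw [Matrix.add_apply]
  have hs : ((q - q⁻¹) • flipA 𝒜 N N) p r
      = algebraMap k 𝒜 (if p.1 = r.2 ∧ p.2 = r.1 then q - q⁻¹ else 0) := by
    rw [Matrix.smul_apply]
    simp only [flipA, Matrix.of_apply]
    split_ifs <;> simp [Algebra.smul_def]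
  rw [hs]
  show algebraMap k 𝒜 (Rmat k q N p r)
      = algebraMap k 𝒜 (RmatInv k q N (p.2, p.1) (r.2, r.1)) + _
  rw [← map_add]
  exact congrArg _ (hecke_k' k q N p r)

lemma kron_mul_one {N : ℕ} (X Y : Matrix (Fin N) (Fin N) 𝒜) :
    (X * Y) ⊗ₖ (1 : Matrix (Fin N) (Fin N) 𝒜)
      = (X ⊗ₖ (1 : Matrix (Fin N) (Fin N) 𝒜)) * (Y ⊗ₖ (1 : Matrix (Fin N) (Fin N) 𝒜)) := by
  ext ⟨i, j⟩ ⟨s, t⟩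
  simp only [Matrix.mul_apply, Matrix.kroneckerMap_apply, Fintype.sum_prod_type,
    Matrix.one_apply, mul_ite, ite_mul, mul_one, mul_zero, zero_mul, one_mul,
    Finset.sum_ite_eq, Finset.sum_ite_eq', Finset.mem_univ, if_true, Finset.sum_ite_irrel,
    Finset.sum_const_zero]

end AuxLemmas

/-- Let `A, D` be N × N matrices over `𝒜` satisfying the defining
relations of the quantized loop edge algebra `𝒟_q(e)`, with `A` and `D` invertible
(with two-sided inverses `Ai`, `Di`).  Then with `M := D A⁻¹ D⁻¹ A`, the quantum moment
map identity holds on the coordinate generators: `R₂₁ M₁ R A₂ = A₂ R₂₁ M₁ R`.  (This is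
the matrix identity establishing that the loop moment map `μ^e_v`, `l^i_j ↦ M^i_j`,
satisfies the quantum moment map condition on the generators `a^m_n`.) -/
theorem moment_map_identity_loop (q : k) (hq : q ≠ 0) {N : ℕ}
    (A D Ai Di : Matrix (Fin N) (Fin N) 𝒜)
    (hrel : LoopRel k 𝒜 q A D)
    (hA₁ : A * Ai = 1) (hA₂ : Ai * A = 1)
    (hD₁ : D * Di = 1) (hD₂ : Di * D = 1) :
    RA21 k 𝒜 q N * ((D * Ai * Di * A) ⊗ₖ (1 : Matrix (Fin N) (Fin N) 𝒜)) * RA k 𝒜 q N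
        * ((1 : Matrix (Fin N) (Fin N) 𝒜) ⊗ₖ A)
      = ((1 : Matrix (Fin N) (Fin N) 𝒜) ⊗ₖ A) * RA21 k 𝒜 q N
        * ((D * Ai * Di * A) ⊗ₖ (1 : Matrix (Fin N) (Fin N) 𝒜)) * RA k 𝒜 q N := by
  obtain ⟨hL1, -, hL3⟩ := hrel
  -- abbreviations
  set r := RA k 𝒜 q N with hr
  set r' := RA21 k 𝒜 q N with hr'
  set ri := RAinv k 𝒜 q N with hri
  set ri' := RAinv21 k 𝒜 q N with hri'
  set t := flipA 𝒜 N N with ht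
  set a1 := A ⊗ₖ (1 : Matrix (Fin N) (Fin N) 𝒜) with ha1
  set a2 := (1 : Matrix (Fin N) (Fin N) 𝒜) ⊗ₖ A with ha2
  set d1 := D ⊗ₖ (1 : Matrix (Fin N) (Fin N) 𝒜) with hd1
  set ai1 := Ai ⊗ₖ (1 : Matrix (Fin N) (Fin N) 𝒜) with hai1
  set di1 := Di ⊗ₖ (1 : Matrix (Fin N) (Fin N) 𝒜) with hdi1
  -- basic invertibility facts
  have hRRi : r * ri = 1 := RA_mul_RAinv q hq N
  have hRiR : ri * r = 1 := RAinv_mul_RA q hq N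
  have hR'Ri' : r' * ri' = 1 := RA21_mul_RAinv21 q hq N
  have hRi'R' : ri' * r' = 1 := RAinv21_mul_RA21 q hq N
  have hA1Ai1 : a1 * ai1 = 1 := by
    rw [ha1, hai1, ← kron_mul_one, hA₁, Matrix.one_kronecker_one]
  have hAi1A1 : ai1 * a1 = 1 := by
    rw [ha1, hai1, ← kron_mul_one, hA₂, Matrix.one_kronecker_one]
  have hD1Di1 : d1 * di1 = 1 := by
    rw [hd1, hdi1, ← kron_mul_one, hD₁, Matrix.one_kronecker_one]
  have hDi1D1 : di1 * d1 = 1 := by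
    rw [hd1, hdi1, ← kron_mul_one, hD₂, Matrix.one_kronecker_one]
  -- generic cancellation
  have can : ∀ (X Y : Matrix (Fin N × Fin N) (Fin N × Fin N) 𝒜), X * Y = 1 →
      ∀ z : Matrix (Fin N × Fin N) (Fin N × Fin N) 𝒜, X * (Y * z) = z := by
    intro X Y h z; rw [← mul_assoc, h, one_mul]
  have c_rri := can r ri hRRi
  have c_ri'r' := can ri' r' hRi'R'
  have c_r'ri' := can r' ri' hR'Ri'
  have c_d1di1 := can d1 di1 hD1Di1
  have c_di1d1 := can di1 d1 hDi1D1
  have c_a1ai1 := can a1 ai1 hA1Ai1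
  have c_ai1a1 := can ai1 a1 hAi1A1
  -- τ-exchange lemmas in ∀-z form
  have ta2 : ∀ z, t * (a2 * z) = a1 * (t * z) := by
    intro z; rw [← mul_assoc, ← mul_assoc, flipA_mul_oneKron]
  have ta1 : ∀ z, t * (a1 * z) = a2 * (t * z) := by
    intro z; rw [← mul_assoc, ← mul_assoc, flipA_mul_kronOne]
  have tr' : ∀ z, t * (r' * z) = r * (t * z) := by
    intro z; rw [← mul_assoc, ← mul_assoc, flipA_mul_RA21]
  -- Hecke identities
  have hH1 : r' = ri + (q - q⁻¹) • t := RA21_hecke q N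
  have hH2 : r = ri' + (q - q⁻¹) • t := RA_hecke q N
  -- the defining relations in ∀-z form
  have L1z : ∀ z, r' * (a1 * (r * (a2 * z))) = a2 * (r' * (a1 * (r * z))) := by
    intro z; simp only [← mul_assoc]; rw [hL1]
  have L3z : ∀ z, r' * (d1 * (r * (a2 * z))) = a2 * (r' * (d1 * (ri' * z))) := by
    intro z; simp only [← mul_assoc]; rw [hL3]
  -- move 1: A₂ past R'⁻¹-dressed A₁
  have m1 : ∀ z, a1 * (r * (a2 * z)) = ri' * (a2 * (r' * (a1 * (r * z)))) := by
    intro z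
    conv_lhs => rw [← c_ri'r' (a1 * (r * (a2 * z)))]
    rw [L1z z]
  -- move 2: A₂ past dressed D₁⁻¹
  have m2 : ∀ z, di1 * (ri' * (a2 * z)) = r * (a2 * (r' * (di1 * (ri' * z)))) := by
    intro z
    have h := L3z (r' * (di1 * (ri' * z)))
    rw [c_ri'r', c_d1di1, c_r'ri'] at h
    rw [← h, c_ri'r', c_di1d1]
  -- key commutation (Hecke trick): A₁ commutes with R A₂ R₂₁
  have Kz : ∀ z, a1 * (r * (a2 * (r' * z))) = r * (a2 * (r' * (a1 * z))) := by
    intro z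
    have h1 : ri' * (a2 * (r' * (a1 * z))) = a1 * (r * (a2 * (ri * z))) := by
      conv_lhs => rw [← c_rri z]
      exact (m1 (ri * z)).symm
    have h2 : t * (a2 * (r' * (a1 * z))) = a1 * (r * (a2 * (t * z))) := by
      rw [ta2, tr', ta1]
    calc a1 * (r * (a2 * (r' * z)))
        = a1 * (r * (a2 * ((ri + (q - q⁻¹) • t) * z))) := by rw [← hH1]
      _ = a1 * (r * (a2 * (ri * z))) + (q - q⁻¹) • (a1 * (r * (a2 * (t * z)))) := by
          rw [add_mul, smul_mul_assoc, mul_add, mul_add, mul_add,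
            Matrix.mul_smul, Matrix.mul_smul, Matrix.mul_smul]
      _ = ri' * (a2 * (r' * (a1 * z))) + (q - q⁻¹) • (t * (a2 * (r' * (a1 * z)))) := by
          rw [h1, h2]
      _ = (ri' + (q - q⁻¹) • t) * (a2 * (r' * (a1 * z))) := by
          rw [add_mul, smul_mul_assoc]
      _ = r * (a2 * (r' * (a1 * z))) := by rw [← hH2]
  -- move 3: A₂ past dressed A₁⁻¹
  have m3 : ∀ z, ai1 * (r * (a2 * (r' * z))) = r * (a2 * (r' * (ai1 * z))) := by
    intro z
    have h := Kz (ai1 * z)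
    rw [c_a1ai1] at h
    rw [← h, c_ai1a1]
  -- the chain of moves
  have main : ∀ z, r' * (d1 * (ai1 * (di1 * (a1 * (r * (a2 * z))))))
      = a2 * (r' * (d1 * (ai1 * (di1 * (a1 * (r * z)))))) := by
    intro z
    rw [m1, m2, c_ri'r', m3, L3z, c_ri'r']
  have hfin := main 1
  simp only [mul_one] at hfin
  have hM : ((D * Ai * Di * A) ⊗ₖ (1 : Matrix (Fin N) (Fin N) 𝒜))
      = d1 * (ai1 * (di1 * a1)) := by
    rw [kron_mul_one (D * Ai * Di) A, kron_mul_one (D * Ai) Di, kron_mul_one D Ai]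
    simp only [mul_assoc]
    rfl
  rw [hM]
  simp only [mul_assoc]
  exact hfin
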